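/- Let C be a fibration category and f : A → B an acyclic fibration. Then the unit and counit of the adjunction f_! ⊣ f* between C↠A and C↠B are componentwise weak equivalences; consequently f* : C↠B → C↠A is a homotopy equivalence of fibration categories and hence a weak equivalence of fibration categories (it induces an equivalence of homotopy categories). -/

import Mathlib

open CategoryTheory CategoryTheory.Limits

open CategoryTheory CategoryTheory.Limits

universe v u

/-- A fibration category in the sense of Brown (as in Kapulkin's paper):
wide subcategories of fibrations and weak equivalences, 2-out-of-6,
isomorphisms are acyclic fibrations, pullbacks along fibrations exist and
(acyclic) fibrations are stable under pullback, all objects are fibrant,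
and every map factors as a weak equivalence followed by a fibration. -/
structure FibrationCategory (C : Type u) [Category.{v} C] where
  Fib : MorphismProperty C
  Weq : MorphismProperty C
  fib_id : ∀ X : C, Fib (𝟙 X)
  fib_comp : ∀ {X Y Z : C} (f : X ⟶ Y) (g : Y ⟶ Z), Fib f → Fib g → Fib (f ≫ g)
  weq_id : ∀ X : C, Weq (𝟙 X)
  weq_comp : ∀ {X Y Z : C} (f : X ⟶ Y) (g : Y ⟶ Z), Weq f → Weq g → Weq (f ≫ g)
  two_of_six : ∀ {X Y Z W : C} (f : X ⟶ Y) (g : Y ⟶ Z) (h : Z ⟶ W),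
      Weq (f ≫ g) → Weq (g ≫ h) → Weq f ∧ Weq g ∧ Weq h ∧ Weq (f ≫ g ≫ h)
  iso_acyclic : ∀ {X Y : C} (f : X ⟶ Y), IsIso f → Fib f ∧ Weq f
  pullback_exists : ∀ {X Y Z : C} (f : X ⟶ Z) (g : Y ⟶ Z), Fib g → HasPullback f g
  fib_stable : ∀ {P X Y Z : C} (fst : P ⟶ X) (snd : P ⟶ Y) (f : X ⟶ Z) (g : Y ⟶ Z),
      IsPullback fst snd f g → Fib g → Fib fst
  acyclic_fib_stable : ∀ {P X Y Z : C} (fst : P ⟶ X) (snd : P ⟶ Y) (f : X ⟶ Z) (g : Y ⟶ Z),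
      IsPullback fst snd f g → Fib g → Weq g → Weq fst
  term : C
  isTerminal : IsTerminal term
  all_fibrant : ∀ X : C, Fib (isTerminal.from X)
  factor : ∀ {X Y : C} (f : X ⟶ Y), ∃ (Z : C) (w : X ⟶ Z) (p : Z ⟶ Y),
      Weq w ∧ Fib p ∧ w ≫ p = f

variable {C : Type u} [Category.{v} C]

/-- The category `C ↠ A` of fibrations over `A`: the full subcategory of the
slice `C/A` on the objects whose structure map is a fibration. -/
abbrev FibOver (F : FibrationCategory C) (A : C) : Type _ :=
  ObjectProperty.FullSubcategory (fun X : Over A => F.Fib X.hom)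

/-- Fibrations in `C ↠ A` are created by the forgetful functor to `C`. -/
def sFib (F : FibrationCategory C) (A : C) : MorphismProperty (FibOver F A) :=
  fun _ _ f => F.Fib f.hom.left

/-- Weak equivalences in `C ↠ A` are created by the forgetful functor to `C`. -/
def sWeq (F : FibrationCategory C) (A : C) : MorphismProperty (FibOver F A) :=
  fun _ _ f => F.Weq f.hom.left

/-- For a fibration `f : A ⟶ B`, the postcomposition functor
`f_! : C↠A ⥤ C↠B`, sending `p : X ↠ A` to `f ∘ p : X ↠ B`. -/
def shriek (F : FibrationCategory C) {A B : C} (f : A ⟶ B) (hf : F.Fib f) :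
    FibOver F A ⥤ FibOver F B where
  obj X := ⟨Over.mk (X.obj.hom ≫ f), F.fib_comp _ _ X.property hf⟩
  map {X Y} g := ⟨Over.homMk g.hom.left (by simp [← Category.assoc, Over.w g.hom])⟩

namespace Stmt7Aux

variable (F : FibrationCategory C) {A B : C} (f : A ⟶ B) (hf : F.Fib f) (hw : F.Weq f)

/-- The chosen pullback of `X.hom` along `f`. -/
noncomputable def pbObj (X : FibOver F B) : FibOver F A :=
  haveI := F.pullback_exists f X.obj.hom X.property
  ⟨Over.mk (pullback.fst f X.obj.hom),
    F.fib_stable _ (pullback.snd f X.obj.hom) f X.obj.hom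
      (IsPullback.of_hasPullback f X.obj.hom) X.property⟩

/-- The second projection from the chosen pullback. -/
noncomputable def pbSnd (X : FibOver F B) :
    (pbObj F f X).obj.left ⟶ X.obj.left :=
  haveI := F.pullback_exists f X.obj.hom X.property
  pullback.snd f X.obj.hom

lemma pbIsPullback (X : FibOver F B) :
    IsPullback (pbObj F f X).obj.hom (pbSnd F f X) f X.obj.hom :=
  haveI := F.pullback_exists f X.obj.hom X.property
  IsPullback.of_hasPullback f X.obj.hom

include hf hw in
lemma pbSnd_weq (X : FibOver F B) : F.Weq (pbSnd F f X) :=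
  F.acyclic_fib_stable _ _ _ _ (pbIsPullback F f X).flip hf hw

@[simp] lemma fo_id_left {D : C} (X : FibOver F D) :
    (𝟙 X : X ⟶ X).hom.left = 𝟙 X.obj.left := rfl

@[simp] lemma fo_comp_left {D : C} {X Y Z : FibOver F D} (g : X ⟶ Y) (h : Y ⟶ Z) :
    (g ≫ h).hom.left = g.hom.left ≫ h.hom.left := rfl

/-- The pullback functor `f* : C↠B ⥤ C↠A`. -/
noncomputable def pbFunctor : FibOver F B ⥤ FibOver F A where
  obj X := pbObj F f X
  map {X Y} g := ⟨Over.homMk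
    ((pbIsPullback F f Y).lift (pbObj F f X).obj.hom (pbSnd F f X ≫ g.hom.left)
      (by rw [(pbIsPullback F f X).w, Category.assoc, Over.w g.hom]))
    ((pbIsPullback F f Y).lift_fst _ _ _)⟩
  map_id X := by
    apply ObjectProperty.hom_ext
    apply Over.OverMorphism.ext
    apply (pbIsPullback F f X).hom_ext
    · simp [(pbIsPullback F f X).lift_fst]
    · simp [(pbIsPullback F f X).lift_snd]
  map_comp {X Y Z} g h := by
    apply ObjectProperty.hom_ext
    apply Over.OverMorphism.ext
    apply (pbIsPullback F f Z).hom_ext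
    · simp [(pbIsPullback F f Z).lift_fst, (pbIsPullback F f Y).lift_fst]
    · simp [(pbIsPullback F f Z).lift_snd, (pbIsPullback F f Y).lift_snd]

@[simp]
lemma pbFunctor_map_left_fst {X Y : FibOver F B} (g : X ⟶ Y) :
    ((pbFunctor F f).map g).hom.left ≫ (pbObj F f Y).obj.hom = (pbObj F f X).obj.hom :=
  (pbIsPullback F f Y).lift_fst _ _ _

@[simp]
lemma pbFunctor_map_left_snd {X Y : FibOver F B} (g : X ⟶ Y) :
    ((pbFunctor F f).map g).hom.left ≫ pbSnd F f Y = pbSnd F f X ≫ g.hom.left :=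
  (pbIsPullback F f Y).lift_snd _ _ _

/-- The adjunction `f_! ⊣ f*`. -/
noncomputable def adj : shriek F f hf ⊣ pbFunctor F f :=
  Adjunction.mkOfHomEquiv
    { homEquiv := fun X Y =>
        { toFun := fun g => ⟨Over.homMk
            ((pbIsPullback F f Y).lift X.obj.hom g.hom.left (Over.w g.hom).symm)
            ((pbIsPullback F f Y).lift_fst _ _ _)⟩
          invFun := fun h => ⟨Over.homMk (h.hom.left ≫ pbSnd F f Y)
            (by
              have hh : h.hom.left ≫ (pbObj F f Y).obj.hom = X.obj.hom := Over.w h.hom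
              show (h.hom.left ≫ pbSnd F f Y) ≫ Y.obj.hom = X.obj.hom ≫ f
              exact (Category.assoc _ _ _).trans ((congrArg (fun x => h.hom.left ≫ x) (pbIsPullback F f Y).w.symm).trans ((Category.assoc _ _ _).symm.trans (congrArg (fun x => x ≫ f) hh))))⟩
          left_inv := fun g => by
            apply ObjectProperty.hom_ext
            apply Over.OverMorphism.ext
            exact (pbIsPullback F f Y).lift_snd _ _ _
          right_inv := fun h => by
            apply ObjectProperty.hom_ext
            apply Over.OverMorphism.ext
            apply (pbIsPullback F f Y).hom_ext
            · simp only [Over.homMk_left]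
              exact ((pbIsPullback F f Y).lift_fst _ _ _).trans (Over.w h.hom).symm
            · simp only [Over.homMk_left]
              exact (pbIsPullback F f Y).lift_snd _ _ _ }
      homEquiv_naturality_left_symm := fun {X' X Y} g h => by
        apply ObjectProperty.hom_ext
        apply Over.OverMorphism.ext
        simp [shriek]
        exact Category.assoc g.hom.left h.hom.left (pbSnd F f Y)
      homEquiv_naturality_right := fun {X Y Y'} g h => by
        apply ObjectProperty.hom_ext
        apply Over.OverMorphism.ext
        apply (pbIsPullback F f Y').hom_ext
        · simp only [Equiv.coe_fn_mk, Over.homMk_left, fo_comp_left, Category.assoc]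
          exact ((pbIsPullback F f Y').lift_fst _ _ _).trans (((pbIsPullback F f Y).lift_fst X.obj.hom g.hom.left _).symm.trans ((congrArg (fun x => _ ≫ x) (pbFunctor_map_left_fst F f h)).symm.trans (Category.assoc _ _ _).symm))
        · simp only [Equiv.coe_fn_mk, Over.homMk_left, fo_comp_left, Category.assoc]
          exact ((pbIsPullback F f Y').lift_snd _ _ _).trans ((congrArg (fun x => x ≫ h.hom.left) ((pbIsPullback F f Y).lift_snd X.obj.hom g.hom.left _).symm).trans ((Category.assoc _ _ _).trans ((congrArg (fun x => _ ≫ x) (pbFunctor_map_left_snd F f h).symm).trans (Category.assoc _ _ _).symm))) }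

include hf hw

lemma weq_cancel_right {X Y Z : FibOver F A} (g : X ⟶ Y) (h : Y ⟶ Z)
    (hgh : F.Weq (g ≫ h).hom.left) (hh : F.Weq h.hom.left) : F.Weq g.hom.left := by
  have := F.two_of_six g.hom.left h.hom.left (𝟙 _) hgh (by simpa using hh)
  exact this.1

lemma pbFunctor_weq {X Y : FibOver F B} (g : X ⟶ Y) (hg : F.Weq g.hom.left) :
    F.Weq ((pbFunctor F f).map g).hom.left := by
  have h1 : F.Weq (((pbFunctor F f).map g).hom.left ≫ pbSnd F f Y) := by
    rw [pbFunctor_map_left_snd]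
    exact F.weq_comp _ _ (pbSnd_weq F f hf hw X) hg
  have := F.two_of_six ((pbFunctor F f).map g).hom.left (pbSnd F f Y) (𝟙 _) h1
    (F.weq_comp _ _ (pbSnd_weq F f hf hw Y) (F.weq_id _))
  exact this.1

omit hw in
lemma unit_left (X : FibOver F A) :
    ((adj F f hf).unit.app X).hom.left =
      (pbIsPullback F f ((shriek F f hf).obj X)).lift X.obj.hom (𝟙 X.obj.left)
        (by simp [shriek]) := rfl

lemma unit_weq (X : FibOver F A) :
    F.Weq ((adj F f hf).unit.app X).hom.left := by
  have hcomp : ((adj F f hf).unit.app X).hom.left ≫ pbSnd F f ((shriek F f hf).obj X) = 𝟙 _ := by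
    rw [unit_left]
    exact (pbIsPullback F f ((shriek F f hf).obj X)).lift_snd _ _ _
  have := F.two_of_six ((adj F f hf).unit.app X).hom.left
    (pbSnd F f ((shriek F f hf).obj X)) (𝟙 _)
    (by rw [hcomp]; exact F.weq_id _)
    (F.weq_comp _ _ (pbSnd_weq F f hf hw ((shriek F f hf).obj X)) (F.weq_id _))
  exact this.1

lemma counit_weq (Y : FibOver F B) :
    F.Weq ((adj F f hf).counit.app Y).hom.left := by
  have h : ((adj F f hf).counit.app Y).hom.left = 𝟙 _ ≫ pbSnd F f Y := rfl
  rw [h, Category.id_comp]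
  exact pbSnd_weq F f hf hw Y

end Stmt7Aux

/-- If `f : A ⟶ B` is an acyclic fibration, then the unit and counit of the
adjunction `f_! ⊣ f*` are componentwise weak equivalences, and consequently the
pullback functor `f* : C↠B ⥤ C↠A` induces an equivalence of homotopy categories
(the localizations at the weak equivalences), i.e. it is a weak equivalence of
fibration categories. -/
theorem stmt7 (F : FibrationCategory C) {A B : C} (f : A ⟶ B)
    (hf : F.Fib f) (hw : F.Weq f) :
    ∃ (P : FibOver F B ⥤ FibOver F A) (adj : shriek F f hf ⊣ P),
      -- `P` is given on objects by pullback along `f`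
      (∀ X : FibOver F B, ∃ q : (P.obj X).obj.left ⟶ X.obj.left,
        IsPullback (P.obj X).obj.hom q f X.obj.hom) ∧
      -- the unit is a componentwise weak equivalence
      (∀ X : FibOver F A, F.Weq (adj.unit.app X).hom.left) ∧
      -- the counit is a componentwise weak equivalence
      (∀ Y : FibOver F B, F.Weq (adj.counit.app Y).hom.left) ∧
      -- `f*` induces an equivalence of homotopy categories
      ∃ L : (sWeq F B).Localization ⥤ (sWeq F A).Localization,
        Nonempty ((sWeq F B).Q ⋙ L ≅ P ⋙ (sWeq F A).Q) ∧ L.IsEquivalence := by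
  refine ⟨Stmt7Aux.pbFunctor F f, Stmt7Aux.adj F f hf,
    fun X => ⟨Stmt7Aux.pbSnd F f X, Stmt7Aux.pbIsPullback F f X⟩,
    Stmt7Aux.unit_weq F f hf hw, Stmt7Aux.counit_weq F f hf hw, ?_⟩
  set P := Stmt7Aux.pbFunctor F f with hP
  set sh := shriek F f hf with hsh
  have hG : (sWeq F B).IsInvertedBy (P ⋙ (sWeq F A).Q) := by
    intro X Y g hg
    exact Localization.inverts (sWeq F A).Q (sWeq F A) _
      (Stmt7Aux.pbFunctor_weq F f hf hw g hg)
  have hF : (sWeq F A).IsInvertedBy (sh ⋙ (sWeq F B).Q) := by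
    intro X Y g hg
    exact Localization.inverts (sWeq F B).Q (sWeq F B) _ hg
  set L := Localization.lift (P ⋙ (sWeq F A).Q) hG (sWeq F B).Q with hL
  set L' := Localization.lift (sh ⋙ (sWeq F B).Q) hF (sWeq F A).Q with hL'
  refine ⟨L, ⟨Localization.fac _ hG (sWeq F B).Q⟩, ?_⟩
  have hcounit : ∀ Y, IsIso ((Functor.whiskerRight (Stmt7Aux.adj F f hf).counit
      (sWeq F B).Q).app Y) := fun Y =>
    Localization.inverts (sWeq F B).Q (sWeq F B) _ (Stmt7Aux.counit_weq F f hf hw Y)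
  have hunit : ∀ X, IsIso ((Functor.whiskerRight (Stmt7Aux.adj F f hf).unit
      (sWeq F A).Q).app X) := fun X =>
    Localization.inverts (sWeq F A).Q (sWeq F A) _ (Stmt7Aux.unit_weq F f hf hw X)
  haveI := hcounit
  haveI := hunit
  haveI : IsIso (Functor.whiskerRight (Stmt7Aux.adj F f hf).counit (sWeq F B).Q) :=
    NatIso.isIso_of_isIso_app _
  haveI : IsIso (Functor.whiskerRight (Stmt7Aux.adj F f hf).unit (sWeq F A).Q) :=
    NatIso.isIso_of_isIso_app _
  have α : (P ⋙ (sWeq F A).Q) ⋙ L' ≅ (sWeq F B).Q :=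
    Functor.associator _ _ _ ≪≫
      Functor.isoWhiskerLeft P (Localization.fac (sh ⋙ (sWeq F B).Q) hF (sWeq F A).Q) ≪≫
      (Functor.associator P sh (sWeq F B).Q).symm ≪≫
      asIso (Functor.whiskerRight (Stmt7Aux.adj F f hf).counit (sWeq F B).Q) ≪≫
      Functor.leftUnitor _
  have β : (sh ⋙ (sWeq F B).Q) ⋙ L ≅ (sWeq F A).Q :=
    Functor.associator _ _ _ ≪≫
      Functor.isoWhiskerLeft sh (Localization.fac (P ⋙ (sWeq F A).Q) hG (sWeq F B).Q) ≪≫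
      (Functor.associator sh P (sWeq F A).Q).symm ≪≫
      (asIso (Functor.whiskerRight (Stmt7Aux.adj F f hf).unit (sWeq F A).Q)).symm ≪≫
      Functor.leftUnitor _
  exact Localization.isEquivalence (sWeq F B).Q (sWeq F B) (sWeq F A).Q (sWeq F A)
    (P ⋙ (sWeq F A).Q) L (sh ⋙ (sWeq F B).Q) L' α β
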